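/- Let Ω ⊂ ℝ² be bounded and let {P^i}_{i=1}^d be a polyhedral partition of Ω (each P^i a polytope, ⋃ P^i = Ω, relative interiors pairwise disjoint) satisfying the internal-vertex condition: for every i and every v ∈ J := ⋃_i ext(P^i), v ∈ P^i implies v ∈ ext(P^i). With 𝒮 = {ext(P^i)}_{i=1}^d and feasibility of T ⊆ J meaning T ⊆ ext(P^i) for some i, every minimal infeasible set has cardinality at most 3. -/

import Mathlib

open Set

lemma tri_interior {a c p : ℝ × ℝ} (h : ¬ Collinear ℝ ({a, c, p} : Set (ℝ × ℝ))) :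
    (interior (convexHull ℝ ({a, c, p} : Set (ℝ × ℝ)))).Nonempty := by
  rw [interior_convexHull_nonempty_iff_affineSpan_eq_top]
  have hai : AffineIndependent ℝ ![a, c, p] := affineIndependent_iff_not_collinear_set.2 h
  have h2 := hai.affineSpan_eq_top_iff_card_eq_finrank_add_one.2 (by simp)
  have : ({p, c, a} : Set (ℝ × ℝ)) = {a, c, p} := by ext y; simp; tauto
  simpa [Matrix.range_cons, Matrix.range_empty, this] using h2

lemma four_points (x : Fin 4 → ℝ × ℝ)
    (hnot : ∀ k, x k ∉ convexHull ℝ (x '' ({k}ᶜ))) :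
    ∃ k l : Fin 4, k ≠ l ∧
      (interior (convexHull ℝ (x '' ({k}ᶜ))) ∩ interior (convexHull ℝ (x '' ({l}ᶜ)))).Nonempty := by
  classical
  -- membership helper
  have hmem : ∀ {j k : Fin 4}, j ≠ k → x j ∈ x '' ({k}ᶜ) := fun {j k} h => ⟨j, by simp [h], rfl⟩
  have key : ∀ u v mid : Fin 4, u ≠ mid → v ≠ mid → Wbtw ℝ (x u) (x mid) (x v) → False := by
    intro u v mid hu hv h
    apply hnot mid
    have h1 : x mid ∈ convexHull ℝ ({x u, x v} : Set (ℝ × ℝ)) := by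
      rw [convexHull_pair]; exact h.mem_segment
    refine convexHull_mono ?_ h1
    intro y hy
    simp only [Set.mem_insert_iff, Set.mem_singleton_iff] at hy
    rcases hy with rfl | rfl
    exacts [hmem hu, hmem hv]
  have hno3 : ∀ k l m : Fin 4, k ≠ l → l ≠ m → k ≠ m →
      ¬ Collinear ℝ ({x k, x l, x m} : Set (ℝ × ℝ)) := by
    intro k l m hkl hlm hkm hcol
    rcases hcol.wbtw_or_wbtw_or_wbtw with h | h | h
    · exact key k m l hkl hlm.symm h
    · exact key l k m hlm hkm h
    · exact key m l k hkm.symm hkl.symm h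
  -- x is not affinely independent
  have hdep : ¬ AffineIndependent ℝ x := by
    intro hai
    have h1 := hai.card_le_finrank_succ
    have h2 : Module.finrank ℝ (vectorSpan ℝ (Set.range x)) ≤ 2 := by
      have := Submodule.finrank_le (vectorSpan ℝ (Set.range x))
      simpa using this
    simp only [Fintype.card_fin] at h1
    omega
  obtain ⟨I, p, hpI, hpIc⟩ := Convex.radon_partition hdep
  -- I and Iᶜ nonempty
  have hIne : I.Nonempty := by
    by_contra h
    rw [Set.not_nonempty_iff_eq_empty] at h
    simp [h] at hpI
  have hIcne : Iᶜ.Nonempty := by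
    by_contra h
    rw [Set.not_nonempty_iff_eq_empty] at h
    simp [h] at hpIc
  have hIfin : I.Finite := Set.toFinite I
  have hIcfin : Iᶜ.Finite := Set.toFinite Iᶜ
  have hsum : I.ncard + Iᶜ.ncard = 4 := by
    have := Set.ncard_add_ncard_compl I
    simpa using this
  have h1 : 0 < I.ncard := hIne.ncard_pos hIfin
  have h2 : 0 < Iᶜ.ncard := hIcne.ncard_pos hIcfin
  -- singleton helper: if the image of a singleton side contains p, contradiction
  have hsingle : ∀ k : Fin 4, p ∈ convexHull ℝ (x '' {k}) → p ∈ convexHull ℝ (x '' ({k}ᶜ)) → False := by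
    intro k hk hkc
    rw [Set.image_singleton, convexHull_singleton, Set.mem_singleton_iff] at hk
    exact hnot k (hk ▸ hkc)
  have hcases : I.ncard = 1 ∨ I.ncard = 2 ∨ I.ncard = 3 := by omega
  rcases hcases with hn | hn | hn
  · obtain ⟨k, rfl⟩ := Set.ncard_eq_one.1 hn
    exact absurd (hsingle k hpI hpIc) (by simp)
  · -- the main case: |I| = 2
    obtain ⟨k, l, hkl, hI⟩ := Set.ncard_eq_two.1 hn
    have hnc : Iᶜ.ncard = 2 := by omega
    obtain ⟨m, n, hmn, hIc⟩ := Set.ncard_eq_two.1 hnc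
    have hmk : m ≠ k ∧ m ≠ l := by
      have : m ∉ I := by rw [← Set.mem_compl_iff, hIc]; simp
      rw [hI] at this; simpa using this
    have hnk : n ≠ k ∧ n ≠ l := by
      have : n ∉ I := by rw [← Set.mem_compl_iff, hIc]; simp
      rw [hI] at this; simpa using this
    rw [hI, Set.image_insert_eq, Set.image_singleton, convexHull_pair] at hpI
    rw [hIc, Set.image_insert_eq, Set.image_singleton, convexHull_pair] at hpIc
    -- p ≠ x k and p ≠ x m
    have hsegsub : ∀ u v w : Fin 4, u ≠ w → v ≠ w →
        segment ℝ (x u) (x v) ⊆ convexHull ℝ (x '' ({w}ᶜ)) := by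
      intro u v w hu hv
      rw [← convexHull_pair]
      refine convexHull_mono ?_
      intro y hy
      simp only [Set.mem_insert_iff, Set.mem_singleton_iff] at hy
      rcases hy with rfl | rfl
      exacts [hmem hu, hmem hv]
    have hpk : p ≠ x k := by
      intro h
      exact hnot k (h ▸ hsegsub m n k hmk.1 hnk.1 hpIc)
    have hpm : p ≠ x m := by
      intro h
      exact hnot m (h ▸ hsegsub k l m hmk.1.symm hmk.2.symm hpI)
    -- ¬ Collinear {x k, x m, p}
    have hcol : ¬ Collinear ℝ ({x k, x m, p} : Set (ℝ × ℝ)) := by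
      intro hc
      have hw1 : Wbtw ℝ (x k) p (x l) := mem_segment_iff_wbtw.1 hpI
      have hw2 : Wbtw ℝ (x m) p (x n) := mem_segment_iff_wbtw.1 hpIc
      have hl : x l ∈ line[ℝ, x k, p] :=
        hw1.collinear.mem_affineSpan_of_mem_of_ne (by simp) (by simp) (by simp) (Ne.symm hpk)
      have hm : x m ∈ line[ℝ, x k, p] :=
        hc.mem_affineSpan_of_mem_of_ne (by simp) (by simp) (by simp) (Ne.symm hpk)
      have hcall : Collinear ℝ ({x l, x m, x k, p} : Set (ℝ × ℝ)) :=
        collinear_insert_insert_of_mem_affineSpan_pair hl hm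
      exact hno3 k l m hkl hmk.2.symm hmk.1.symm
        (hcall.subset (by intro y hy; simp at hy ⊢; tauto))
    obtain ⟨q, hq⟩ := tri_interior hcol
    have hsub1 : convexHull ℝ ({x k, x m, p} : Set (ℝ × ℝ)) ⊆ convexHull ℝ (x '' ({n}ᶜ)) := by
      refine convexHull_min ?_ (convex_convexHull ℝ _)
      intro y hy
      simp only [Set.mem_insert_iff, Set.mem_singleton_iff] at hy
      rcases hy with rfl | rfl | rfl
      · exact subset_convexHull ℝ _ (hmem hnk.1.symm)
      · exact subset_convexHull ℝ _ (hmem hmn)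
      · exact hsegsub k l n hnk.1.symm hnk.2.symm hpI
    have hsub2 : convexHull ℝ ({x k, x m, p} : Set (ℝ × ℝ)) ⊆ convexHull ℝ (x '' ({l}ᶜ)) := by
      refine convexHull_min ?_ (convex_convexHull ℝ _)
      intro y hy
      simp only [Set.mem_insert_iff, Set.mem_singleton_iff] at hy
      rcases hy with rfl | rfl | rfl
      · exact subset_convexHull ℝ _ (hmem hkl)
      · exact subset_convexHull ℝ _ (hmem hmk.2)
      · exact hsegsub m n l hmk.2 hnk.2 hpIc
    exact ⟨n, l, hnk.2, q, interior_mono hsub1 hq, interior_mono hsub2 hq⟩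
  · -- |I| = 3, so Iᶜ is a singleton
    have hnc : Iᶜ.ncard = 1 := by omega
    obtain ⟨k, hk⟩ := Set.ncard_eq_one.1 hnc
    have hIeq : I = {k}ᶜ := by rw [← compl_compl I, hk]
    exact absurd (hsingle k (by rwa [hk] at hpIc) (by rwa [hIeq] at hpI)) (by simp)


/-- For a polyhedral partition of a bounded region of the plane satisfying the
internal-vertex condition, every minimal infeasible set of the associated combinatorial
disjunctive constraint (ground set the union of extreme points, feasible sets those
contained in the extreme points of a single polytope) has cardinality at most 3. -/
theorem stmt19 (d : ℕ) (P : Fin d → Set (ℝ × ℝ))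
    (hpoly : ∀ i, ∃ V : Finset (ℝ × ℝ), P i = convexHull ℝ (V : Set (ℝ × ℝ)))
    (hdisj : ∀ i j, i ≠ j →
      Disjoint (intrinsicInterior ℝ (P i)) (intrinsicInterior ℝ (P j)))
    (hintern : ∀ i, ∀ v ∈ ⋃ i', Set.extremePoints ℝ (P i'),
      v ∈ P i → v ∈ Set.extremePoints ℝ (P i)) :
    ∀ T : Set (ℝ × ℝ), T ⊆ (⋃ i, Set.extremePoints ℝ (P i)) →
      (¬ ∃ i, T ⊆ Set.extremePoints ℝ (P i)) →
      (∀ T' ⊆ T, T' ≠ T → ∃ i, T' ⊆ Set.extremePoints ℝ (P i)) →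
      T.ncard ≤ 3 := by
  classical
  intro T hTJ hinfeas hmin
  by_contra hcard
  push_neg at hcard
  -- T is finite (otherwise ncard = 0)
  have hTfin : T.Finite := by
    by_contra h
    rw [Set.Infinite.ncard h] at hcard
    omega
  have hconvex : ∀ i, Convex ℝ (P i) := by
    intro i
    obtain ⟨V, hV⟩ := hpoly i
    rw [hV]; exact convex_convexHull ℝ _
  -- for each v ∈ T, choose a polytope containing T \ {v} as extreme points; v avoids it
  have key : ∀ v ∈ T, ∃ i, T \ {v} ⊆ Set.extremePoints ℝ (P i) ∧ v ∉ P i := by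
    intro v hv
    obtain ⟨i, hi⟩ := hmin (T \ {v}) Set.diff_subset (by
      intro h
      have : v ∈ T \ {v} := by rw [h]; exact hv
      simp at this)
    refine ⟨i, hi, fun hvP => hinfeas ⟨i, fun w hw => ?_⟩⟩
    by_cases hwv : w = v
    · exact hwv ▸ hintern i v (hTJ hv) hvP
    · exact hi ⟨hw, hwv⟩
  -- pick four distinct points of T
  have h1 : T.Nonempty := by
    rw [← Set.ncard_pos hTfin] at *; omega
  obtain ⟨a, ha⟩ := h1
  have hc1 : (T \ {a}).ncard = T.ncard - 1 := Set.ncard_diff_singleton_of_mem ha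
  have h2 : (T \ {a}).Nonempty := by
    rw [← Set.ncard_pos hTfin.diff]; omega
  obtain ⟨b, hb⟩ := h2
  have hc2 : ((T \ {a}) \ {b}).ncard = T.ncard - 2 := by
    rw [Set.ncard_diff_singleton_of_mem hb]; omega
  have h3 : ((T \ {a}) \ {b}).Nonempty := by
    rw [← Set.ncard_pos hTfin.diff.diff]; omega
  obtain ⟨c, hc⟩ := h3
  have hc3 : (((T \ {a}) \ {b}) \ {c}).ncard = T.ncard - 3 := by
    rw [Set.ncard_diff_singleton_of_mem hc]; omega
  have h4 : (((T \ {a}) \ {b}) \ {c}).Nonempty := by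
    rw [← Set.ncard_pos hTfin.diff.diff.diff]; omega
  obtain ⟨e, he⟩ := h4
  -- memberships and distinctness
  have hbT : b ∈ T := hb.1
  have hcT : c ∈ T := hc.1.1
  have heT : e ∈ T := he.1.1.1
  have hab : a ≠ b := fun h => hb.2 (by simp [h])
  have hac : a ≠ c := fun h => hc.1.2 (by simp [h])
  have hae : a ≠ e := fun h => he.1.1.2 (by simp [h])
  have hbc : b ≠ c := fun h => hc.2 (by simp [h])
  have hbe : b ≠ e := fun h => he.1.2 (by simp [h])
  have hce : c ≠ e := fun h => he.2 (by simp [h])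
  set x : Fin 4 → ℝ × ℝ := ![a, b, c, e] with hx
  have hxT : ∀ k, x k ∈ T := by
    intro k; fin_cases k <;> simpa [hx] using ‹_›
  have hinj : Function.Injective x := by
    intro j k hjk
    fin_cases j <;> fin_cases k <;> simp_all [hx] <;> first
      | rfl
      | exact absurd hjk (by assumption)
      | exact absurd hjk.symm (by assumption)
  -- the image of a complement is inside T minus the point
  have himg : ∀ k : Fin 4, x '' ({k}ᶜ) ⊆ T \ {x k} := by
    intro k y hy
    obtain ⟨j, hj, rfl⟩ := hy
    exact ⟨hxT j, fun h => (by simpa using hj : j ≠ k) (hinj h)⟩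
  -- hypothesis of the four-point lemma
  have hnot : ∀ k, x k ∉ convexHull ℝ (x '' ({k}ᶜ)) := by
    intro k hk
    obtain ⟨i, hi, hvi⟩ := key (x k) (hxT k)
    exact hvi (convexHull_min (fun y hy => extremePoints_subset (hi (himg k hy)))
      (hconvex i) hk)
  obtain ⟨k, l, hkl, q, hqk, hql⟩ := four_points x hnot
  obtain ⟨ik, hik, hvik⟩ := key (x k) (hxT k)
  obtain ⟨il, hil, hvil⟩ := key (x l) (hxT l)
  have hikl : ik ≠ il := by
    intro h
    apply hinfeas
    refine ⟨ik, fun w hw => ?_⟩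
    by_cases hwk : w = x k
    · subst hwk; rw [h]; exact hil ⟨hw, fun hh => hkl (hinj (by simpa using hh))⟩
    · exact hik ⟨hw, hwk⟩
  have hsubk : convexHull ℝ (x '' ({k}ᶜ)) ⊆ P ik :=
    convexHull_min (fun y hy => extremePoints_subset (hik (himg k hy))) (hconvex ik)
  have hsubl : convexHull ℝ (x '' ({l}ᶜ)) ⊆ P il :=
    convexHull_min (fun y hy => extremePoints_subset (hil (himg l hy))) (hconvex il)
  have hqik : q ∈ intrinsicInterior ℝ (P ik) :=
    interior_subset_intrinsicInterior (interior_mono hsubk hqk)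
  have hqil : q ∈ intrinsicInterior ℝ (P il) :=
    interior_subset_intrinsicInterior (interior_mono hsubl hql)
  exact Set.disjoint_left.1 (hdisj ik il hikl) hqik hqil
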